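/- Let ζ : F_3 → F_6 be the group homomorphism from the free group on x_1, x_2, x_3 to the free group on y_1, z_1, y_2, z_2, y_3, z_3 defined by ζ(x_i) = [y_i, z_i]. Then for every k ≥ 1, ζ maps the k-th term of the lower central series of F_3 into the 2k-th term of the lower central series of F_6. -/

import Mathlib

open Subgroup

open scoped commutatorElement

lemma lcs_succ_eq {G : Type*} [Group G] (n : ℕ) :
    (⊤ : Subgroup G).lowerCentralSeries (n + 1) = ⁅(⊤ : Subgroup G).lowerCentralSeries n, (⊤ : Subgroup G)⁆ := rfl

/-- Three subgroups lemma relative to a normal subgroup. -/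
lemma three_subgroups_le {G : Type*} [Group G] {N A B C : Subgroup G} [N.Normal]
    (h1 : ⁅⁅B, C⁆, A⁆ ≤ N) (h2 : ⁅⁅C, A⁆, B⁆ ≤ N) : ⁅⁅A, B⁆, C⁆ ≤ N := by
  let f := QuotientGroup.mk' N
  have key : ∀ H K L : Subgroup G, ⁅⁅H, K⁆, L⁆ ≤ N ↔ ⁅⁅H.map f, K.map f⁆, L.map f⁆ = ⊥ := by
    intro H K L
    rw [← Subgroup.map_commutator, ← Subgroup.map_commutator, Subgroup.map_eq_bot_iff,
      QuotientGroup.ker_mk']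
  rw [key]
  exact Subgroup.commutator_commutator_eq_bot_of_rotate ((key B C A).mp h1) ((key C A B).mp h2)

lemma lcs_comm_le {G : Type*} [Group G] :
    ∀ (n m : ℕ), ⁅(⊤ : Subgroup G).lowerCentralSeries m, (⊤ : Subgroup G).lowerCentralSeries n⁆ ≤
      (⊤ : Subgroup G).lowerCentralSeries (m + n + 1)
  | 0, m => by
      rw [show (⊤ : Subgroup G).lowerCentralSeries 0 = ⊤ from rfl, ← lcs_succ_eq]
  | n + 1, m => by
    rw [lcs_succ_eq n, Subgroup.commutator_comm]
    apply three_subgroups_le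
    · rw [Subgroup.commutator_comm (⊤ : Subgroup G), ← lcs_succ_eq]
      calc ⁅(⊤ : Subgroup G).lowerCentralSeries (m + 1), (⊤ : Subgroup G).lowerCentralSeries n⁆
          ≤ (⊤ : Subgroup G).lowerCentralSeries (m + 1 + n + 1) := lcs_comm_le n (m + 1)
        _ = (⊤ : Subgroup G).lowerCentralSeries (m + (n + 1) + 1) := by ring_nf
    · calc ⁅⁅(⊤ : Subgroup G).lowerCentralSeries m, (⊤ : Subgroup G).lowerCentralSeries n⁆, (⊤ : Subgroup G)⁆
          ≤ ⁅(⊤ : Subgroup G).lowerCentralSeries (m + n + 1), (⊤ : Subgroup G)⁆ :=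
            Subgroup.commutator_mono (lcs_comm_le n m) le_rfl
        _ = (⊤ : Subgroup G).lowerCentralSeries (m + n + 2) := (lcs_succ_eq (m + n + 1)).symm
        _ = (⊤ : Subgroup G).lowerCentralSeries (m + (n + 1) + 1) := by ring_nf

theorem zeta_maps_lcs_into_double (k : ℕ) (hk : 1 ≤ k)
    (ζ : FreeGroup (Fin 3) →* FreeGroup (Fin 3 × Bool))
    (hζ : ζ = FreeGroup.lift
      (fun i => ⁅FreeGroup.of ((i, false) : Fin 3 × Bool), FreeGroup.of ((i, true))⁆)) :
    ∀ x ∈ (⊤ : Subgroup (FreeGroup (Fin 3))).lowerCentralSeries (k - 1),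
      ζ x ∈ (⊤ : Subgroup (FreeGroup (Fin 3 × Bool))).lowerCentralSeries (2 * k - 1) := by
  set G := FreeGroup (Fin 3)
  set H := FreeGroup (Fin 3 × Bool)
  -- ζ maps everything into γ₂ = lowerCentralSeries 1
  have hrange : ∀ x : G, ζ x ∈ (⊤ : Subgroup H).lowerCentralSeries 1 := by
    intro x
    induction x using FreeGroup.induction_on with
    | C1 => rw [map_one]; exact one_mem _
    | of i =>
        have : ζ (FreeGroup.of i) = ⁅FreeGroup.of ((i, false) : Fin 3 × Bool),
            FreeGroup.of ((i, true))⁆ := by rw [hζ, FreeGroup.lift_apply_of]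
        show ζ (FreeGroup.of i) ∈ (⊤ : Subgroup H).lowerCentralSeries 1
        rw [this]
        exact Subgroup.commutator_mem_commutator (mem_top _) (mem_top _)
    | inv_of i h => rw [map_inv]; exact inv_mem h
    | mul a b ha hb => rw [map_mul]; exact mul_mem ha hb
  have main : ∀ n : ℕ, ∀ x ∈ (⊤ : Subgroup G).lowerCentralSeries n, ζ x ∈ (⊤ : Subgroup H).lowerCentralSeries (2 * n + 1) := by
    intro n
    induction n with
    | zero => intro x _; simpa using hrange x
    | succ n ih =>
        intro x hx
        have hle : ((⊤ : Subgroup G).lowerCentralSeries (n + 1)).map ζ ≤ (⊤ : Subgroup H).lowerCentralSeries (2 * (n + 1) + 1) := by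
          rw [lcs_succ_eq n, Subgroup.map_commutator]
          have h1 : ((⊤ : Subgroup G).lowerCentralSeries n).map ζ ≤ (⊤ : Subgroup H).lowerCentralSeries (2 * n + 1) := by
            rintro _ ⟨y, hy, rfl⟩; exact ih y hy
          have h2 : (⊤ : Subgroup G).map ζ ≤ (⊤ : Subgroup H).lowerCentralSeries 1 := by
            rintro _ ⟨y, -, rfl⟩; exact hrange y
          calc ⁅((⊤ : Subgroup G).lowerCentralSeries n).map ζ, (⊤ : Subgroup G).map ζ⁆
              ≤ ⁅(⊤ : Subgroup H).lowerCentralSeries (2 * n + 1), (⊤ : Subgroup H).lowerCentralSeries 1⁆ :=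
                Subgroup.commutator_mono h1 h2
            _ ≤ (⊤ : Subgroup H).lowerCentralSeries (2 * n + 1 + 1 + 1) := lcs_comm_le 1 (2 * n + 1)
            _ = (⊤ : Subgroup H).lowerCentralSeries (2 * (n + 1) + 1) := by ring_nf
        exact hle ⟨x, hx, rfl⟩
  obtain ⟨m, rfl⟩ : ∃ m, k = m + 1 := ⟨k - 1, (Nat.succ_pred_eq_of_pos hk).symm⟩
  intro x hx
  have := main m x (by simpa using hx)
  have heq : 2 * (m + 1) - 1 = 2 * m + 1 := by omega
  rw [heq]
  exact this
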